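/- Let k ≥ 2 and n = 2k+1. Consider the multiset σ consisting of k copies of 1 and k+1 copies of -k/(k+1). Then the sum of the elements of σ is 0, and there is no partition of σ into k nonempty sub-multisets σ_1, ..., σ_k such that each σ_i contains at least one copy of 1 (as its maximum-modulus element) and has nonnegative element sum. -/

import Mathlib

lemma sum_of_two_vals (c : ℝ) (hc1 : c ≠ 1) (s : Multiset ℝ) (h : ∀ x ∈ s, x = 1 ∨ x = c) :
    s.sum = (s.count 1 : ℝ) * 1 + (s.count c : ℝ) * c := by
  induction s using Multiset.induction with
  | empty => simp
  | cons a t ih =>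
    have ha := h a (Multiset.mem_cons_self a t)
    have ht : ∀ x ∈ t, x = 1 ∨ x = c := fun x hx => h x (Multiset.mem_cons_of_mem hx)
    rcases ha with ha | ha
    · subst ha
      rw [Multiset.sum_cons, ih ht, Multiset.count_cons, Multiset.count_cons]
      simp [hc1, Ne.symm hc1]; ring
    · subst ha
      rw [Multiset.sum_cons, ih ht, Multiset.count_cons, Multiset.count_cons]
      simp [hc1, Ne.symm hc1]; ring

/-- The odd-order trace-zero spectrum `σ_{2k+1}` (k copies of `1`, `k+1` copies of
`-k/(k+1)`) has zero sum and admits no partition into `k` nonempty parts each containing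
a copy of `1` and having nonnegative sum. -/
theorem odd_order_not_partitionable (k : ℕ) (hk : 2 ≤ k) :
    (Multiset.replicate k (1 : ℝ) +
        Multiset.replicate (k + 1) (-(k : ℝ) / ((k : ℝ) + 1))).sum = 0 ∧
    ¬ ∃ P : Fin k → Multiset ℝ,
        (∑ i, P i) = Multiset.replicate k (1 : ℝ) +
          Multiset.replicate (k + 1) (-(k : ℝ) / ((k : ℝ) + 1)) ∧
        ∀ i, P i ≠ 0 ∧ (1 : ℝ) ∈ P i ∧ 0 ≤ (P i).sum := by
  have hk0 : (0:ℝ) < (k:ℝ) := by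
    have : (0:ℕ) < k := by omega
    exact_mod_cast this
  have hk1 : (0:ℝ) < (k:ℝ) + 1 := by linarith
  set c : ℝ := -(k : ℝ) / ((k : ℝ) + 1) with hc
  have hcneg : c < 0 := by
    rw [hc]; apply div_neg_of_neg_of_pos <;> linarith
  have hcne : c ≠ 1 := by linarith
  constructor
  · rw [Multiset.sum_add, Multiset.sum_replicate, Multiset.sum_replicate]
    rw [hc]
    field_simp
    ring_nf
    field_simp
    ring
  · rintro ⟨P, hP, hprop⟩
    set σ : Multiset ℝ := Multiset.replicate k (1 : ℝ) +
      Multiset.replicate (k + 1) c with hσ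
    -- counts in σ
    have hcount1 : σ.count 1 = k := by
      rw [hσ, Multiset.count_add, Multiset.count_replicate, Multiset.count_replicate]
      simp [hcne]
    have hcountc : σ.count c = k + 1 := by
      rw [hσ, Multiset.count_add, Multiset.count_replicate, Multiset.count_replicate]
      simp [hcne, Ne.symm hcne]
    -- count sums
    have hsum1 : ∑ i, (P i).count 1 = k := by
      rw [← Multiset.count_sum', hP]; exact hcount1
    have hsumc : ∑ i, (P i).count c = k + 1 := by
      rw [← Multiset.count_sum', hP]; exact hcountc
    -- each part has at least one 1
    have hone : ∀ i, 1 ≤ (P i).count 1 := fun i =>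
      Multiset.one_le_count_iff_mem.mpr (hprop i).2.1
    -- so each count of 1 is exactly 1
    have hcard : (Finset.univ : Finset (Fin k)).card = k := by simp
    have heach1 : ∀ i, (P i).count 1 = 1 := by
      intro j
      by_contra h
      have h2 : 2 ≤ (P j).count 1 := by have := hone j; omega
      have key : ∑ i, (P i).count 1 = (P j).count 1 + ∑ i ∈ Finset.univ.erase j, (P i).count 1 :=
        (Finset.add_sum_erase _ (fun i => (P i).count 1) (Finset.mem_univ j)).symm
      have hrest : (Finset.univ.erase j).card ≤ ∑ i ∈ Finset.univ.erase j, (P i).count 1 := by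
        calc (Finset.univ.erase j).card = (Finset.univ.erase j).card • 1 := by simp
        _ ≤ ∑ i ∈ Finset.univ.erase j, (P i).count 1 :=
              Finset.card_nsmul_le_sum _ _ _ (fun i _ => hone i)
      have hcarde : (Finset.univ.erase j).card = k - 1 := by
        simp [Finset.card_erase_of_mem]
      omega
    -- pigeonhole on c
    have hex : ∃ j, 2 ≤ (P j).count c := by
      by_contra h
      push_neg at h
      have : ∑ i, (P i).count c ≤ (Finset.univ : Finset (Fin k)).card • 1 :=
        Finset.sum_le_card_nsmul _ _ _ (fun i _ => by have := h i; omega)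
      simp at this
      omega
    obtain ⟨j, hj⟩ := hex
    -- P j only contains 1 and c
    have hle : P j ≤ σ := by
      rw [← hP]
      exact Finset.single_le_sum (f := P) (fun i _ => bot_le) (Finset.mem_univ j)
    have hmem : ∀ x ∈ P j, x = 1 ∨ x = c := by
      intro x hx
      have : x ∈ σ := Multiset.mem_of_le hle hx
      rw [hσ, Multiset.mem_add, Multiset.mem_replicate, Multiset.mem_replicate] at this
      tauto
    -- sum of P j is negative
    have hsumj := sum_of_two_vals c hcne (P j) hmem
    rw [heach1 j] at hsumj
    have hble : ((P j).count c : ℝ) * c ≤ 2 * c := by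
      apply mul_le_mul_of_nonpos_right _ (le_of_lt hcneg)
      exact_mod_cast hj
    have h2c : (1:ℝ) + 2 * c < 0 := by
      have h2 : (2:ℝ) ≤ (k:ℝ) := by exact_mod_cast hk
      have hceq : c * ((k:ℝ) + 1) = -(k:ℝ) := by rw [hc]; field_simp
      nlinarith [hceq, hk1, h2]
    have := (hprop j).2.2
    rw [hsumj] at this
    push_cast at this
    linarith
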